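/- arXiv:math/0411514 — 3 statements merged into one kernel-verified Lean document; each statement's English description precedes it below -/
import Mathlib

section
/- Let A be a commutative Noetherian ring and, for each positive integer n, let R_n = A[x_1,…,x_n] ⊆ R_{n+1}, with 𝔖_m acting on R_m by permuting variables. Let (I_n)_{n≥1} be a symmetrization invariant chain: each I_n is an ideal of R_n, I_n ⊆ I_{n+1}, and L_m(I_n) ⊆ I_m for all n ≤ m. Then the chain stabilizes modulo the symmetric group: there exists a positive integer N such that L_m(I_n) = I_m for all m ≥ n > N. -/
/-- The `m`-symmetrization `L_m(B)` of a set `B ⊆ R_n = A[x_1,…,x_n]` (for `n ≤ m`):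
the ideal of `R_m = A[x_1,…,x_m]` generated by `{σg : σ ∈ 𝔖_m, g ∈ B}`. -/
noncomputable def Lsym {A : Type*} [CommRing A] {n m : ℕ} (h : n ≤ m)
    (B : Set (MvPolynomial (Fin n) A)) : Ideal (MvPolynomial (Fin m) A) :=
  Ideal.span {p : MvPolynomial (Fin m) A | ∃ σ : Equiv.Perm (Fin m), ∃ g ∈ B,
    p = MvPolynomial.rename (⇑σ) (MvPolynomial.rename (Fin.castLE h) g)}


namespace Stmt17Aux

open MvPolynomial Finsupp

/-- compare finitely supported monomials at the largest differing index -/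
def mlt (u v : ℕ →₀ ℕ) : Prop := ∃ j, (∀ d, j < d → u d = v d) ∧ u j < v j

theorem mlt_iff_lex (u v : ℕ →₀ ℕ) : mlt u v ↔ Finsupp.Lex (· > ·) (· < ·) u v := by
  rw [Finsupp.lex_def]
  constructor
  · rintro ⟨j, h1, h2⟩; exact ⟨j, fun d hd => h1 d hd, h2⟩
  · rintro ⟨j, h1, h2⟩; exact ⟨j, fun d hd => h1 d hd, h2⟩

theorem mlt_wf : WellFounded (mlt) := by
  have : WellFounded (Finsupp.Lex ((· > ·) : ℕ → ℕ → Prop) ((· < ·) : ℕ → ℕ → Prop)) := by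
    refine Finsupp.Lex.wellFounded' (fun n => Nat.not_lt_zero n) (wellFounded_lt) ?_
    exact (wellFounded_lt : WellFounded ((· < ·) : ℕ → ℕ → Prop))
  exact Subrelation.wf (fun {u v} h => (mlt_iff_lex u v).1 h) this

theorem mlt_trans {u v w : ℕ →₀ ℕ} (h1 : mlt u v) (h2 : mlt v w) : mlt u w := by
  obtain ⟨j1, e1, l1⟩ := h1
  obtain ⟨j2, e2, l2⟩ := h2
  rcases lt_trichotomy j1 j2 with h | h | h
  · exact ⟨j2, fun d hd => (e1 d (h.trans hd)).trans (e2 d hd), (e1 j2 h) ▸ l2⟩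
  · subst h; exact ⟨j1, fun d hd => (e1 d hd).trans (e2 d hd), l1.trans l2⟩
  · exact ⟨j1, fun d hd => (e1 d hd).trans (e2 d (h.trans hd)), (e2 j1 h) ▸ l1⟩

theorem mlt_irrefl (u : ℕ →₀ ℕ) : ¬ mlt u u := by
  rintro ⟨j, _, h⟩; exact lt_irrefl _ h

theorem mlt_trichot {u v : ℕ →₀ ℕ} (h : u ≠ v) : mlt u v ∨ mlt v u := by
  classical
  have hne : ((u.support ∪ v.support).filter (fun i => u i ≠ v i)).Nonempty := by
    have : ∃ i, u i ≠ v i := by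
      by_contra hc; push_neg at hc; exact h (Finsupp.ext hc)
    obtain ⟨i, hi⟩ := this
    refine ⟨i, Finset.mem_filter.2 ⟨?_, hi⟩⟩
    rcases Classical.em (u i = 0) with h0 | h0
    · exact Finset.mem_union.2 (Or.inr (Finsupp.mem_support_iff.2 (fun hv => hi (by rw [h0, hv]))))
    · exact Finset.mem_union.2 (Or.inl (Finsupp.mem_support_iff.2 h0))
  set s := (u.support ∪ v.support).filter (fun i => u i ≠ v i) with hs
  obtain ⟨j, hj, hmax⟩ := Finset.exists_max_image s id hne
  have hjne : u j ≠ v j := (Finset.mem_filter.1 hj).2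
  have habove : ∀ d, j < d → u d = v d := by
    intro d hd
    by_contra hc
    have : d ∈ s := by
      refine Finset.mem_filter.2 ⟨?_, hc⟩
      rcases Classical.em (u d = 0) with h0 | h0
      · exact Finset.mem_union.2 (Or.inr (Finsupp.mem_support_iff.2 (fun hv => hc (by rw [h0, hv]))))
      · exact Finset.mem_union.2 (Or.inl (Finsupp.mem_support_iff.2 h0))
    exact absurd (hmax d this) (not_le.2 hd)
  rcases lt_or_gt_of_ne hjne with hlt | hgt
  · exact Or.inl ⟨j, habove, hlt⟩
  · exact Or.inr ⟨j, fun d hd => (habove d hd).symm, hgt⟩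

theorem mlt_add_right {u v : ℕ →₀ ℕ} (w : ℕ →₀ ℕ) (h : mlt u v) : mlt (u + w) (v + w) := by
  obtain ⟨j, e, l⟩ := h
  exact ⟨j, fun d hd => by simp [Finsupp.add_apply, e d hd], by simpa [Finsupp.add_apply] using l⟩

theorem mlt_add_left {u v : ℕ →₀ ℕ} (w : ℕ →₀ ℕ) (h : mlt u v) : mlt (w + u) (w + v) := by
  rw [add_comm w u, add_comm w v]; exact mlt_add_right w h

theorem mlt_mapDomain {φ : ℕ → ℕ} (hφ : StrictMono φ) {u v : ℕ →₀ ℕ} (h : mlt u v) :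
    mlt (u.mapDomain φ) (v.mapDomain φ) := by
  obtain ⟨j, e, l⟩ := h
  refine ⟨φ j, ?_, ?_⟩
  · intro d hd
    rcases Classical.em (∃ i, φ i = d) with ⟨i, rfl⟩ | hnr
    · rw [Finsupp.mapDomain_apply hφ.injective, Finsupp.mapDomain_apply hφ.injective]
      exact e i (hφ.lt_iff_lt.1 hd)
    · rw [Finsupp.mapDomain_notin_range _ _ (by simpa [Set.range] using hnr),
        Finsupp.mapDomain_notin_range _ _ (by simpa [Set.range] using hnr)]
  · rw [Finsupp.mapDomain_apply hφ.injective, Finsupp.mapDomain_apply hφ.injective]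
    exact l

/-- a finite nonempty set of monomials has a top element -/
theorem exists_max (s : Finset (ℕ →₀ ℕ)) (hs : s.Nonempty) :
    ∃ d ∈ s, ∀ e ∈ s, e ≠ d → mlt e d := by
  classical
  induction s using Finset.induction_on with
  | empty => exact absurd hs (by simp)
  | @insert a t ha ih =>
    rcases t.eq_empty_or_nonempty with rfl | hne
    · exact ⟨a, by simp, by intro e he hne'; simp at he; exact absurd he hne'⟩
    · obtain ⟨d, hd, hmax⟩ := ih hne
      rcases Classical.em (a = d) with had | had
      · subst had
        exact ⟨a, Finset.mem_insert_of_mem hd, fun e he hne' => by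
          rcases Finset.mem_insert.1 he with rfl | he'
          · exact absurd rfl hne'
          · exact hmax e he' hne'⟩
      rcases mlt_trichot had with hlt | hgt
      · exact ⟨d, Finset.mem_insert_of_mem hd, fun e he hne' => by
          rcases Finset.mem_insert.1 he with rfl | he'
          · exact hlt
          · exact hmax e he' hne'⟩
      · refine ⟨a, Finset.mem_insert_self _ _, fun e he hne' => ?_⟩
        rcases Finset.mem_insert.1 he with rfl | he'
        · exact absurd rfl hne'
        · rcases Classical.em (e = d) with rfl | hed
          · exact hgt
          · exact mlt_trans (hmax e he' hed) hgt


/-- extract a strictly monotone index embedding from `List.SublistForall₂` -/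
theorem sublistForall₂_exists_strictMono {α : Type*} {r : α → α → Prop} :
    ∀ {l₁ l₂ : List α}, List.SublistForall₂ r l₁ l₂ →
      ∃ φ : ℕ → ℕ, StrictMono φ ∧ ∀ i (h : i < l₁.length),
        ∃ h' : φ i < l₂.length, r (l₁.get ⟨i, h⟩) (l₂.get ⟨φ i, h'⟩) := by
  intro l₁ l₂ h
  induction h with
  | nil => exact ⟨id, strictMono_id, fun i h => absurd h (by simp)⟩
  | @cons a b l₁' l₂' hr hsf ih =>
    obtain ⟨φ, hmono, hspec⟩ := ih
    refine ⟨fun i => Nat.casesOn i 0 (fun i' => φ i' + 1), ?_, ?_⟩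
    · intro i j hij
      cases i with
      | zero => cases j with
        | zero => exact absurd hij (lt_irrefl _)
        | succ j' => exact Nat.succ_pos _
      | succ i' => cases j with
        | zero => exact absurd hij (by omega)
        | succ j' =>
          show φ i' + 1 < φ j' + 1
          have := hmono (show i' < j' by omega); omega
    · intro i h
      cases i with
      | zero => exact ⟨Nat.succ_pos _, hr⟩
      | succ i' =>
        obtain ⟨h', hrr⟩ := hspec i' (by simpa using h)
        exact ⟨by simpa using Nat.succ_lt_succ h', hrr⟩
  | @cons_right b l₁' l₂' hsf ih =>
    obtain ⟨φ, hmono, hspec⟩ := ih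
    refine ⟨fun i => φ i + 1, fun i j hij => by show φ i + 1 < φ j + 1; have := hmono hij; omega, ?_⟩
    intro i h
    obtain ⟨h', hrr⟩ := hspec i h
    exact ⟨by simpa using Nat.succ_lt_succ h', hrr⟩

/-- any two injections between finite types are conjugate: extend an injection to a permutation -/
theorem exists_perm_comp {α β : Type*} [Fintype β] [DecidableEq β] {f g : α → β}
    (hf : Function.Injective f) (hg : Function.Injective g) :
    ∃ τ : Equiv.Perm β, ∀ a, τ (f a) = g a := by
  classical
  have : Fintype α := Fintype.ofInjective f hf
  have hcard : Fintype.card ((Set.range f)ᶜ : Set β) = Fintype.card ((Set.range g)ᶜ : Set β) := by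
    rw [Fintype.card_compl_set, Fintype.card_compl_set, Set.card_range_of_injective hf,
      Set.card_range_of_injective hg]
  obtain ⟨c⟩ := Fintype.card_eq.1 hcard
  refine ⟨(Equiv.Set.sumCompl (Set.range f)).symm.trans
    ((((Equiv.ofInjective f hf).symm.trans (Equiv.ofInjective g hg)).sumCongr c).trans
      (Equiv.Set.sumCompl (Set.range g))), fun a => ?_⟩
  simp only [Equiv.trans_apply]
  rw [Equiv.Set.sumCompl_symm_apply_of_mem (Set.mem_range_self a)]
  simp only [Equiv.sumCongr_apply, Sum.map_inl, Equiv.Set.sumCompl_apply_inl, Equiv.trans_apply]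
  have h1 : (Equiv.ofInjective f hf).symm ⟨f a, Set.mem_range_self a⟩ = a := by
    simp
  rw [h1, Equiv.ofInjective_apply]

/-- Higman + Noetherianity of `A`: in any sequence, some leading datum is a combination
of earlier ones with embeddable monomial lists -/
theorem noe {A : Type*} [CommRing A] [IsNoetherianRing A] (a : ℕ → A) (L : ℕ → List ℕ) :
    ∃ k, a k ∈ Ideal.span {x : A | ∃ i, i < k ∧
      List.SublistForall₂ (· ≤ ·) (L i) (L k) ∧ x = a i} := by
  classical
  have hpwo : (Set.univ : Set ℕ).PartiallyWellOrderedOn (· ≤ ·) :=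
    (Set.isWF_univ_iff.2 (inferInstance : WellFoundedLT ℕ)).isPWO
  have hlist := hpwo.partiallyWellOrderedOn_sublistForall₂ (· ≤ ·)
  haveI : IsPreorder (List ℕ) (List.SublistForall₂ (fun x1 x2 : ℕ => x1 ≤ x2)) :=
    { toRefl := List.SublistForall₂.is_refl, toIsTrans := List.SublistForall₂.is_trans }
  obtain ⟨g, hg⟩ := hlist.exists_monotone_subseq (f := L) (fun n => by simp)
  -- chain of ideals
  let T : ℕ →o Ideal A :=
    ⟨fun j => Ideal.span ((fun i => a (g i)) '' {i | i < j}), by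
      intro i j hij
      exact Ideal.span_mono (Set.image_mono (fun t ht => lt_of_lt_of_le ht hij))⟩
  obtain ⟨jj, hjj⟩ := monotone_stabilizes_iff_noetherian.2 ‹IsNoetherianRing A› T
  refine ⟨g (jj), ?_⟩
  have h1 : a (g jj) ∈ T (jj + 1) := Ideal.subset_span ⟨jj, by simp, rfl⟩
  rw [← hjj (jj+1) (Nat.le_succ _)] at h1
  refine Ideal.span_mono ?_ h1
  rintro x ⟨i, hi, rfl⟩
  exact ⟨g i, g.strictMono hi, hg i jj (le_of_lt hi), rfl⟩


/-- leading monomial w.r.t. `mlt` -/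
noncomputable def ldm {A : Type*} [CommRing A] (F : MvPolynomial ℕ A) : ℕ →₀ ℕ :=
  if h : F.support.Nonempty then (exists_max F.support h).choose else 0

theorem ldm_spec {A : Type*} [CommRing A] {F : MvPolynomial ℕ A} (h : F ≠ 0) :
    ldm F ∈ F.support ∧ ∀ d ∈ F.support, d ≠ ldm F → mlt d (ldm F) := by
  have hne : F.support.Nonempty :=
    Finset.nonempty_iff_ne_empty.2 (fun hc => h (MvPolynomial.support_eq_empty.1 hc))
  rw [ldm, dif_pos hne]
  obtain ⟨hd, hmax⟩ := (exists_max F.support hne).choose_spec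
  exact ⟨hd, hmax⟩

theorem supp_lt {A : Type*} [CommRing A] {m : ℕ} (f : MvPolynomial (Fin m) A) :
    ∀ d ∈ (MvPolynomial.rename (Fin.val) f).support, ∀ t ∈ d.support, t < m := by
  classical
  intro d hd t ht
  rw [MvPolynomial.support_rename_of_injective Fin.val_injective] at hd
  obtain ⟨d', _, rfl⟩ := Finset.mem_image.1 hd
  have := Finsupp.mapDomain_support ht
  obtain ⟨r, _, rfl⟩ := Finset.mem_image.1 this
  exact r.isLt

theorem mapDomain_val_equivFun {m : ℕ} (z : ℕ →₀ ℕ) (hz : ∀ t ∈ z.support, t < m) :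
    Finsupp.mapDomain (Fin.val)
      (Finsupp.equivFunOnFinite.symm (fun r : Fin m => z r.val)) = z := by
  classical
  ext t
  rcases Classical.em (t < m) with h | h
  · have : t = Fin.val (⟨t, h⟩ : Fin m) := rfl
    rw [this, Finsupp.mapDomain_apply Fin.val_injective]
    simp
  · rw [Finsupp.mapDomain_notin_range]
    · by_contra hc
      exact h (hz t (Finsupp.mem_support_iff.2 (fun h0 => hc h0.symm)))
    · rintro ⟨r, rfl⟩; exact h r.isLt

open MvPolynomial in
theorem core {A : Type*} [CommRing A] [IsNoetherianRing A]
    (I : ∀ n : ℕ, Ideal (MvPolynomial (Fin n) A))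
    (hchain : ∀ n : ℕ, ∀ f ∈ I n,
      MvPolynomial.rename (Fin.castLE (Nat.le_succ n)) f ∈ I (n + 1))
    (hsym : ∀ (n m : ℕ) (h : n ≤ m), Lsym h ((I n : Ideal (MvPolynomial (Fin n) A)) :
        Set (MvPolynomial (Fin n) A)) ≤ I m)
    (n m : ℕ → ℕ) (f : ∀ k, MvPolynomial (Fin (m k)) A)
    (hnm : ∀ k, n k ≤ m k) (hmn : ∀ i k, i < k → m i < n k)
    (hfI : ∀ k, f k ∈ I (m k))
    (hfL : ∀ k, f k ∉ Lsym (hnm k) ((I (n k) : Ideal (MvPolynomial (Fin (n k)) A)) :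
        Set (MvPolynomial (Fin (n k)) A)))
    (hfmin : ∀ k, ∀ f' : MvPolynomial (Fin (m k)) A, f' ∈ I (m k) →
      f' ∉ Lsym (hnm k) ((I (n k) : Ideal (MvPolynomial (Fin (n k)) A)) :
        Set (MvPolynomial (Fin (n k)) A)) →
      ¬ mlt (ldm (rename Fin.val f')) (ldm (rename Fin.val (f k)))) :
    False := by
  classical
  -- membership along the chain
  have memle : ∀ (n₁ n₂ : ℕ) (h : n₁ ≤ n₂), ∀ g ∈ I n₁, rename (Fin.castLE h) g ∈ I n₂ := by
    intro n₁ n₂ h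
    induction n₂, h using Nat.le_induction with
    | base =>
      intro g hg
      have hid : rename (Fin.castLE (le_refl n₁)) g = g := by
        have : (Fin.castLE (le_refl n₁) : Fin n₁ → Fin n₁) = id := by
          funext x; exact Fin.ext rfl
        rw [this, rename_id, AlgHom.id_apply]
      rwa [hid]
    | succ n₂ hn ih =>
      intro g hg
      have h2 := hchain n₂ _ (ih g hg)
      rwa [rename_rename, show (Fin.castLE (Nat.le_succ n₂) ∘ Fin.castLE hn)
        = Fin.castLE (le_trans hn (Nat.le_succ n₂)) from funext fun x => Fin.ext rfl] at h2
  -- nonzero-ness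
  have hf0 : ∀ k, f k ≠ 0 := fun k h => hfL k (h ▸ (Lsym (hnm k) _).zero_mem)
  have he0 : ∀ k, rename (Fin.val) (f k) ≠ 0 := by
    intro k hc
    exact hf0 k (rename_injective _ Fin.val_injective (by rw [hc, map_zero]))
  set u : ℕ → (ℕ →₀ ℕ) := fun k => ldm (rename Fin.val (f k)) with hu
  set a : ℕ → A := fun k => coeff (u k) (rename Fin.val (f k)) with ha
  set L : ℕ → List ℕ := fun k => List.ofFn (fun r : Fin (m k) => u k r.val) with hL
  have humem : ∀ k, u k ∈ (rename Fin.val (f k)).support := fun k => (ldm_spec (he0 k)).1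
  have humax : ∀ k, ∀ d ∈ (rename Fin.val (f k)).support, d ≠ u k → mlt d (u k) :=
    fun k => (ldm_spec (he0 k)).2
  have husupp : ∀ k, ∀ t ∈ (u k).support, t < m k := fun k => supp_lt (f k) _ (humem k)
  -- apply the Noetherian/Higman lemma
  obtain ⟨k, hk⟩ := noe a L
  rw [Ideal.span, Submodule.mem_span_set'] at hk
  obtain ⟨t, c, s, hsum⟩ := hk
  choose idx hidx hSF hval using fun j : Fin t => (s j).2
  -- extract strictly monotone embeddings
  choose φ hφmono hφspec using fun j : Fin t => sublistForall₂_exists_strictMono (hSF j)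
  have hbound : ∀ j : Fin t, ∀ r : ℕ, r < m (idx j) →
      φ j r < m k ∧ u (idx j) r ≤ u k (φ j r) := by
    intro j r hr
    have hr' : r < (L (idx j)).length := by simpa [hL] using hr
    obtain ⟨h', hle⟩ := hφspec j r hr'
    refine ⟨by simpa [hL] using h', ?_⟩
    simpa [hL, List.get_ofFn] using hle
  have hmilt : ∀ j : Fin t, m (idx j) < n k := fun j => hmn _ _ (hidx j)
  have hmile : ∀ j : Fin t, m (idx j) ≤ m k := fun j => le_trans (le_of_lt (hmilt j)) (hnm k)
  -- the image monomials
  set v : Fin t → (ℕ →₀ ℕ) := fun j => Finsupp.mapDomain (φ j) (u (idx j)) with hv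
  have hvle : ∀ j : Fin t, ∀ x : ℕ, v j x ≤ u k x := by
    intro j x
    rcases Classical.em (∃ r, φ j r = x) with ⟨r, rfl⟩ | hnr
    · rw [hv]
      rw [Finsupp.mapDomain_apply (hφmono j).injective]
      rcases Classical.em (r < m (idx j)) with hr | hr
      · exact (hbound j r hr).2
      · have : u (idx j) r = 0 := by
          by_contra hc
          exact hr (husupp _ r (Finsupp.mem_support_iff.2 hc))
        rw [this]; exact Nat.zero_le _
    · rw [hv, Finsupp.mapDomain_notin_range _ _ (by simpa [Set.range] using hnr)]
      exact Nat.zero_le _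
  have hvsum : ∀ j : Fin t, (u k - v j) + v j = u k := by
    intro j
    ext x
    simp only [Finsupp.add_apply, Finsupp.tsub_apply]
    exact Nat.sub_add_cancel (hvle j x)
  -- monomial shift in Fin (m k)
  set w : Fin t → (Fin (m k) →₀ ℕ) :=
    fun j => Finsupp.equivFunOnFinite.symm (fun r : Fin (m k) => (u k - v j) r.val) with hw
  have hwmap : ∀ j : Fin t, Finsupp.mapDomain (Fin.val) (w j) = u k - v j := by
    intro j
    refine mapDomain_val_equivFun _ ?_
    intro x hx
    refine husupp k x (Finsupp.mem_support_iff.2 ?_)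
    intro hc
    refine Finsupp.mem_support_iff.1 hx ?_
    simp [Finsupp.tsub_apply, hc]
  -- the strictly monotone maps as maps into Fin (m k)
  set σf : ∀ j : Fin t, Fin (m (idx j)) → Fin (m k) :=
    fun j r => ⟨φ j r.val, (hbound j r.val r.isLt).1⟩ with hσf
  have hσinj : ∀ j : Fin t, Function.Injective (σf j) := by
    intro j x y hxy
    have : φ j x.val = φ j y.val := congrArg Fin.val hxy
    exact Fin.ext ((hφmono j).injective this)
  -- the correction terms
  set G : Fin t → MvPolynomial (Fin (m k)) A := fun j => rename (σf j) (f (idx j)) with hG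
  set term : Fin t → MvPolynomial (Fin (m k)) A :=
    fun j => monomial (w j) (c j) * G j with hterm
  -- each G j is in the symmetrized ideal
  have hGmem : ∀ j : Fin t, G j ∈ Lsym (hnm k) ((I (n k) :
      Ideal (MvPolynomial (Fin (n k)) A)) : Set (MvPolynomial (Fin (n k)) A)) := by
    intro j
    obtain ⟨τ, hτ⟩ := exists_perm_comp
      (Fin.castLE_injective (hmile j)) (hσinj j)
    refine Ideal.subset_span ⟨τ, rename (Fin.castLE (le_of_lt (hmilt j))) (f (idx j)),
      memle _ _ _ _ (hfI (idx j)), ?_⟩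
    rw [hG, rename_rename, rename_rename]
    show rename (σf j) (f (idx j)) = _
    have hcomp : ((⇑τ ∘ Fin.castLE (hnm k)) ∘ Fin.castLE (le_of_lt (hmilt j)))
        = σf j := by
      funext x
      have h1 : (Fin.castLE (hnm k) (Fin.castLE (le_of_lt (hmilt j)) x))
          = Fin.castLE (hmile j) x := Fin.ext rfl
      show τ (Fin.castLE (hnm k) (Fin.castLE (le_of_lt (hmilt j)) x)) = σf j x
      rw [h1, hτ]
    rw [hcomp]
  -- define the reduced polynomial
  set f' : MvPolynomial (Fin (m k)) A := f k - ∑ j : Fin t, term j with hf'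
  have hsumL : (∑ j : Fin t, term j) ∈ Lsym (hnm k) ((I (n k) :
      Ideal (MvPolynomial (Fin (n k)) A)) : Set (MvPolynomial (Fin (n k)) A)) :=
    Ideal.sum_mem _ (fun j _ => Ideal.mul_mem_left _ _ (hGmem j))
  have hf'I : f' ∈ I (m k) := (I (m k)).sub_mem (hfI k) (hsym _ _ _ hsumL)
  have hf'L : f' ∉ Lsym (hnm k) ((I (n k) :
      Ideal (MvPolynomial (Fin (n k)) A)) : Set (MvPolynomial (Fin (n k)) A)) := by
    intro hc
    refine hfL k ?_
    have : f k = f' + ∑ j : Fin t, term j := by rw [hf']; ring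
    rw [this]
    exact (Lsym _ _).add_mem hc hsumL
  -- pass to MvPolynomial ℕ A
  set E : MvPolynomial ℕ A := rename Fin.val f' with hE
  have hEeq : E = rename Fin.val (f k) - ∑ j : Fin t,
      (monomial (u k - v j) (c j) * rename (φ j) (rename Fin.val (f (idx j)))) := by
    rw [hE, hf', map_sub, map_sum]
    congr 1
    refine Finset.sum_congr rfl (fun j _ => ?_)
    rw [hterm, hG]
    rw [map_mul, rename_monomial, hwmap, rename_rename, rename_rename]
    have hcm : (Fin.val ∘ σf j : Fin (m (idx j)) → ℕ) = (φ j ∘ Fin.val) :=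
      funext fun x => rfl
    rw [hcm]
  -- coefficient of `u k` in a term
  have hcoefft : ∀ j : Fin t, coeff (u k)
      (monomial (u k - v j) (c j) * rename (φ j) (rename Fin.val (f (idx j))))
      = c j * a (idx j) := by
    intro j
    have h1 : coeff ((u k - v j) + v j)
        (monomial (u k - v j) (c j) * rename (φ j) (rename Fin.val (f (idx j))))
        = c j * coeff (v j) (rename (φ j) (rename Fin.val (f (idx j)))) :=
      coeff_monomial_mul _ _ _ _
    rw [hvsum j] at h1
    have hvj : v j = Finsupp.mapDomain (φ j) (u (idx j)) := rfl
    rw [h1, hvj, coeff_rename_mapDomain _ (hφmono j).injective]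
  -- coefficient of `u k` in `E` vanishes
  have hcoeffE : coeff (u k) E = 0 := by
    rw [hEeq, coeff_sub, coeff_sum]
    have : ∑ j : Fin t, coeff (u k)
        (monomial (u k - v j) (c j) * rename (φ j) (rename Fin.val (f (idx j))))
        = a k := by
      rw [← hsum]
      refine Finset.sum_congr rfl (fun j _ => ?_)
      rw [hcoefft j, hval j, smul_eq_mul]
    rw [this]
    exact sub_self _
  -- every monomial of a term is `u k` or below
  have htermsupp : ∀ j : Fin t, ∀ d ∈
      (monomial (u k - v j) (c j) * rename (φ j) (rename Fin.val (f (idx j)))).support,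
      d = u k ∨ mlt d (u k) := by
    intro j d hd
    have hsub := support_mul (monomial (u k - v j) (c j))
      (rename (φ j) (rename Fin.val (f (idx j)))) hd
    rw [Finset.mem_add] at hsub
    obtain ⟨z1, hz1, z2, hz2, rfl⟩ := hsub
    have hz1' : z1 = u k - v j := Finset.mem_singleton.1 (support_monomial_subset hz1)
    subst hz1'
    rw [support_rename_of_injective (hφmono j).injective] at hz2
    obtain ⟨d', hd', rfl⟩ := Finset.mem_image.1 hz2
    have hvj : v j = Finsupp.mapDomain (φ j) (u (idx j)) := rfl
    rcases Classical.em (d' = u (idx j)) with rfl | hne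
    · left; rw [← hvj, hvsum j]
    · right
      have h1 := mlt_mapDomain (hφmono j) (humax (idx j) d' hd' hne)
      rw [← hvj] at h1
      have h2 := mlt_add_left (u k - v j) h1
      rwa [hvsum j] at h2
  -- all support monomials of `E` are strictly below `u k`
  have hEsupp : ∀ d ∈ E.support, mlt d (u k) := by
    intro d hd
    have hdne : coeff d E ≠ 0 := Finsupp.mem_support_iff.1 hd
    have hEor : d = u k ∨ mlt d (u k) := by
      by_contra hc
      push_neg at hc
      obtain ⟨hc1, hc2⟩ := hc
      refine hdne ?_
      rw [hEeq, coeff_sub, coeff_sum]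
      have hFz : coeff d (rename Fin.val (f k)) = 0 := by
        by_contra hcz
        rcases Classical.em (d = u k) with h | h
        · exact hc1 h
        · exact hc2 (humax k d (Finsupp.mem_support_iff.2 hcz) h)
      have htz : ∀ j : Fin t, coeff d
          (monomial (u k - v j) (c j) * rename (φ j) (rename Fin.val (f (idx j)))) = 0 := by
        intro j
        by_contra hcz
        rcases htermsupp j d (Finsupp.mem_support_iff.2 hcz) with h | h
        · exact hc1 h
        · exact hc2 h
      rw [hFz, Finset.sum_congr rfl (fun j _ => htz j), Finset.sum_const_zero, sub_zero]
    rcases hEor with h | h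
    · exfalso
      rw [h] at hd
      exact hdne (by rw [h, hcoeffE])
    · exact h
  -- contradiction with minimality
  have hE0 : E ≠ 0 := by
    intro hc
    exact hfL k (by
      have : f' = 0 := rename_injective _ Fin.val_injective (by rw [← hE, hc, map_zero])
      exact absurd (this ▸ (Lsym (hnm k) _).zero_mem) hf'L) |>.elim
  have hmin := hfmin k f' hf'I hf'L
  refine hmin ?_
  have : ldm E ∈ E.support := (ldm_spec hE0).1
  exact hEsupp _ this


end Stmt17Aux

/-- Let `A` be commutative Noetherian and `(I_n)` a symmetrization
invariant chain: `I_n` an ideal of `R_n = A[x_1,…,x_n]`, `I_n ⊆ I_{n+1}` and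
`L_m(I_n) ⊆ I_m` for `n ≤ m`.  Then the chain stabilizes modulo the symmetric group:
there is a positive integer `N` with `L_m(I_n) = I_m` for all `m ≥ n > N`. -/

theorem stmt17 {A : Type*} [CommRing A] [IsNoetherianRing A]
    (I : ∀ n : ℕ, Ideal (MvPolynomial (Fin n) A))
    (hchain : ∀ n : ℕ, ∀ f ∈ I n,
      MvPolynomial.rename (Fin.castLE (Nat.le_succ n)) f ∈ I (n + 1))
    (hsym : ∀ (n m : ℕ) (h : n ≤ m),
      Lsym h ((I n : Ideal (MvPolynomial (Fin n) A)) :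
        Set (MvPolynomial (Fin n) A)) ≤ I m) :
    ∃ N : ℕ, 0 < N ∧ ∀ (n m : ℕ) (h : n ≤ m), N < n →
      Lsym h ((I n : Ideal (MvPolynomial (Fin n) A)) :
        Set (MvPolynomial (Fin n) A)) = I m := by
  classical
  by_contra hcon
  push_neg at hcon
  have key : ∀ N : ℕ, ∃ p : ℕ × ℕ, N < p.1 ∧ ∃ (hle : p.1 ≤ p.2),
      ∃ f : MvPolynomial (Fin p.2) A, f ∈ I p.2 ∧
        f ∉ Lsym hle ((I p.1 : Ideal (MvPolynomial (Fin p.1) A)) :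
          Set (MvPolynomial (Fin p.1) A)) ∧
        ∀ f' : MvPolynomial (Fin p.2) A, f' ∈ I p.2 →
          f' ∉ Lsym hle ((I p.1 : Ideal (MvPolynomial (Fin p.1) A)) :
            Set (MvPolynomial (Fin p.1) A)) →
          ¬ Stmt17Aux.mlt (Stmt17Aux.ldm (MvPolynomial.rename Fin.val f'))
            (Stmt17Aux.ldm (MvPolynomial.rename Fin.val f)) := by
    intro N
    obtain ⟨n, m, h, hN, hne⟩ := hcon (N + 1) (Nat.succ_pos _)
    have hlt : Lsym h ((I n : Ideal (MvPolynomial (Fin n) A)) :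
        Set (MvPolynomial (Fin n) A)) < I m := lt_of_le_of_ne (hsym n m h) hne
    set D : Set (ℕ →₀ ℕ) := {d | ∃ f : MvPolynomial (Fin m) A, f ∈ I m ∧
      f ∉ Lsym h ((I n : Ideal (MvPolynomial (Fin n) A)) :
        Set (MvPolynomial (Fin n) A)) ∧
      d = Stmt17Aux.ldm (MvPolynomial.rename Fin.val f)} with hD
    have hDne : D.Nonempty := by
      obtain ⟨f, hf1, hf2⟩ := SetLike.exists_of_lt hlt
      exact ⟨_, f, hf1, hf2, rfl⟩
    have hmem := Stmt17Aux.mlt_wf.min_mem D hDne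
    obtain ⟨f, hf1, hf2, hf3⟩ := hmem
    refine ⟨(n, m), by omega, h, f, hf1, hf2, ?_⟩
    intro f' h1 h2 hc
    rw [← hf3] at hc
    exact Stmt17Aux.mlt_wf.not_lt_min D ⟨f', h1, h2, rfl⟩ hc
  choose p hpN hple f hfI hfL hfmin using key
  set Nof : ℕ → ℕ := fun k => Nat.rec 0 (fun _ i => (p i).2) k with hNof
  set nn : ℕ → ℕ := fun k => (p (Nof k)).1 with hnn
  set mm : ℕ → ℕ := fun k => (p (Nof k)).2 with hmm
  have hstep : ∀ k, mm k < nn (k + 1) := by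
    intro k
    have h1 : nn (k + 1) = (p (mm k)).1 := rfl
    rw [h1]
    exact hpN (mm k)
  have hnmle : ∀ k, nn k ≤ mm k := fun k => hple (Nof k)
  have hmn : ∀ i k, i < k → mm i < nn k := by
    intro i k
    induction k with
    | zero => omega
    | succ k ih =>
      intro hik
      rcases Nat.lt_succ_iff_lt_or_eq.1 hik with h | h
      · exact lt_of_lt_of_le (ih h) (le_trans (hnmle k) (le_of_lt (hstep k)))
      · subst h; exact hstep i
  exact Stmt17Aux.core I hchain hsym nn mm (fun k => f (Nof k)) hnmle hmn
    (fun k => hfI (Nof k)) (fun k => hfL (Nof k)) (fun k => hfmin (Nof k))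
end

section
/- Let K be a field, k ≥ 2 an integer, Ω = {1, 2, 3, …}, and let ⟨Ω⟩^k denote the set of k-tuples of pairwise distinct elements of Ω. Let R = K[{x_u}_{u ∈ ⟨Ω⟩^k}] be the polynomial ring with one indeterminate x_u for each u ∈ ⟨Ω⟩^k, on which the group 𝔖_∞ of finitary permutations of Ω acts by σ·x_{(u_1,…,u_k)} = x_{(σ(u_1),…,σ(u_k))}. Then R is not Noetherian as an R[𝔖_∞]-module: there exists a 𝔖_∞-invariant ideal I of R such that for no finite set B ⊆ I does I equal the ideal of R generated by {σb : σ ∈ 𝔖_∞, b ∈ B}. -/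
/-- The action of a permutation `σ` of `ℕ` on the injective `k`-tuples of natural
numbers (indexing the indeterminates `x_u`, `u ∈ ⟨Ω⟩^k`). -/
def permTuple {k : ℕ} (σ : Equiv.Perm ℕ) :
    {u : Fin k → ℕ // Function.Injective u} → {u : Fin k → ℕ // Function.Injective u} :=
  fun u => ⟨⇑σ ∘ u.1, σ.injective.comp u.2⟩

namespace Stmt18Aux

open MvPolynomial

variable {k : ℕ}

abbrev V (k : ℕ) := {u : Fin k → ℕ // Function.Injective u}

/-- successor mod `n` on `Fin n`. -/
def fsucc {n : ℕ} (i : Fin n) : Fin n := ⟨(i.val + 1) % n, Nat.mod_lt _ i.pos⟩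

lemma fsucc_eq {n : ℕ} [NeZero n] (i : Fin n) : fsucc i = i + 1 := by
  refine Fin.ext ?_
  show (i.val + 1) % n = ((i + 1 : Fin n)).val
  rw [Fin.add_def, Fin.val_one', Nat.add_mod i.val 1 n, Nat.mod_eq_of_lt i.isLt]

/-- `m` is a "cycle monomial" of length `n`. -/
def Cyc (hk : 2 ≤ k) (n : ℕ) (m : V k →₀ ℕ) : Prop :=
  ∃ c : Fin n → ℕ, Function.Injective c ∧ ∃ t : Fin n → V k,
    (∀ i, (t i).1 ⟨0, by omega⟩ = c i ∧ (t i).1 ⟨1, hk⟩ = c (fsucc i)) ∧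
    m = ∑ i, Finsupp.single (t i) 1

lemma permTuple_injective (σ : Equiv.Perm ℕ) :
    Function.Injective (permTuple (k := k) σ) := by
  intro u v h
  apply Subtype.ext
  have h' : ⇑σ ∘ u.1 = ⇑σ ∘ v.1 := congrArg Subtype.val h
  funext j
  exact σ.injective (congrFun h' j)

lemma cyc_mapDomain (hk : 2 ≤ k) (σ : Equiv.Perm ℕ) {n : ℕ} {m : V k →₀ ℕ}
    (h : Cyc hk n m) : Cyc hk n (Finsupp.mapDomain (permTuple σ) m) := by
  obtain ⟨c, hc, t, ht, rfl⟩ := h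
  refine ⟨⇑σ ∘ c, σ.injective.comp hc, permTuple σ ∘ t, fun i => ?_, ?_⟩
  · exact ⟨congrArg σ (ht i).1, congrArg σ (ht i).2⟩
  · rw [Finsupp.mapDomain_finset_sum]
    simp [Finsupp.mapDomain_single]

lemma deg_eq (hk : 2 ≤ k) {n : ℕ} {m : V k →₀ ℕ} (h : Cyc hk n m) :
    (m.sum fun _ e => e) = n := by
  obtain ⟨c, hc, t, ht, rfl⟩ := h
  rw [← Finsupp.sum_finsetSum_index (fun _ => rfl) (fun _ _ _ => rfl)]
  simp [Finsupp.sum_single_index]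

lemma deg_mono {m' m : V k →₀ ℕ} (h : m' ≤ m) :
    (m'.sum fun _ e => e) ≤ (m.sum fun _ e => e) := by
  obtain ⟨d, rfl⟩ := exists_add_of_le h
  rw [Finsupp.sum_add_index' (fun _ => rfl) (fun _ _ _ => rfl)]
  exact Nat.le_add_right _ _

open Fin.NatCast Fin.CommRing in
/-- Rigidity: a cycle monomial dividing a cycle monomial of length `n` has length
a (positive) multiple of `n`. -/
lemma cyc_rigid (hk : 2 ≤ k) {n n' : ℕ} (hn' : 1 ≤ n') {m m' : V k →₀ ℕ}
    (h : Cyc hk n m) (h' : Cyc hk n' m') (hle : m' ≤ m) : n ≤ n' := by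
  rcases Nat.eq_zero_or_pos n with hn | hn
  · omega
  haveI : NeZero n := ⟨by omega⟩
  haveI : NeZero n' := ⟨by omega⟩
  obtain ⟨c, hc, t, ht, rfl⟩ := h
  obtain ⟨c', hc', t', ht', rfl⟩ := h'
  -- each variable of m' is a variable of m
  have key : ∀ j : Fin n', ∃ i : Fin n, t i = t' j := by
    intro j
    have h1 : (1 : ℕ) ≤ (∑ i, Finsupp.single (t' i) 1) (t' j) := by
      rw [Finsupp.finset_sum_apply]
      calc (1 : ℕ) = (Finsupp.single (t' j) 1) (t' j) := by simp
        _ ≤ _ := Finset.single_le_sum (f := fun i => (Finsupp.single (t' i) (1 : ℕ)) (t' j))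
          (fun _ _ => Nat.zero_le _) (Finset.mem_univ j)
    have h2 : (∑ i, Finsupp.single (t i) 1) (t' j) ≠ 0 := by
      have := hle (t' j)
      omega
    rw [Finsupp.finset_sum_apply] at h2
    obtain ⟨i, _, hi⟩ := Finset.exists_ne_zero_of_sum_ne_zero h2
    refine ⟨i, ?_⟩
    by_contra hne
    exact hi (Finsupp.single_eq_of_ne' hne)
  choose f hf using key
  have hcf : ∀ j : Fin n', c (f j) = c' j := by
    intro j
    rw [← (ht (f j)).1, hf, (ht' j).1]
  have hstep : ∀ j : Fin n', f (j + 1) = f j + 1 := by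
    intro j
    apply hc
    rw [← fsucc_eq, ← fsucc_eq, hcf, ← (ht' j).2, ← hf, (ht (f j)).2]
  have hiter : ∀ a : ℕ, f (a : Fin n') = f 0 + (a : Fin n) := by
    intro a
    induction a with
    | zero => simp
    | succ a ih =>
        have : ((a + 1 : ℕ) : Fin n') = (a : Fin n') + 1 := by push_cast; ring
        rw [this, hstep, ih]
        push_cast
        ring
  have hfin : ((n' : ℕ) : Fin n) = 0 := by
    have h0 := hiter n'
    rw [Fin.natCast_self] at h0
    have : f 0 + (0 : Fin n) = f 0 + ((n' : ℕ) : Fin n) := by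
      rw [add_zero]; exact h0
    exact (add_left_cancel this).symm
  have hdvd : n ∣ n' := Fin.natCast_eq_zero.mp hfin
  exact Nat.le_of_dvd hn' hdvd

/-- Existence of cycle monomials of every length `n ≥ 2`. -/
lemma cyc_exists (hk : 2 ≤ k) {n : ℕ} (hn : 2 ≤ n) : ∃ m, Cyc hk n m := by
  haveI : NeZero n := ⟨by omega⟩
  have htup : ∀ i : Fin n, Function.Injective
      (fun j : Fin k => if j.val = 0 then i.val else
        if j.val = 1 then (i.val + 1) % n else n + j.val) := by
    intro i j j' hjj'
    have hi := i.isLt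
    have hB2 : (i.val + 1) % n < n := Nat.mod_lt _ (by omega)
    have hBne : (i.val + 1) % n ≠ i.val := by
      rcases Nat.lt_or_ge (i.val + 1) n with h | h
      · rw [Nat.mod_eq_of_lt h]; omega
      · have he : i.val + 1 = n := by omega
        rw [he, Nat.mod_self]; omega
    refine Fin.ext ?_
    simp only at hjj'
    split_ifs at hjj' <;> omega
  refine ⟨∑ i, Finsupp.single (⟨_, htup i⟩ : V k) 1, fun i => i.val, Fin.val_injective,
    fun i => ⟨_, htup i⟩, fun i => ⟨?_, ?_⟩, rfl⟩
  · simp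
  · simp [fsucc]

end Stmt18Aux

/-- Let `K` be a field and `k ≥ 2`.  The polynomial ring
`R = K[{x_u}_{u ∈ ⟨Ω⟩^k}]` (one indeterminate for each injective `k`-tuple from
`Ω = ℕ`), with the group `𝔖_∞` of finitary permutations of `Ω` acting by
`σ·x_{(u_1,…,u_k)} = x_{(σu_1,…,σu_k)}`, is not Noetherian as an `R[𝔖_∞]`-module:
there is a `𝔖_∞`-invariant ideal `I` of `R` which, for no finite `B ⊆ I`, equals the
ideal generated by `{σb : σ ∈ 𝔖_∞, b ∈ B}`. -/
theorem stmt18 {K : Type*} [Field K] (k : ℕ) (hk : 2 ≤ k) :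
    ∃ I : Ideal (MvPolynomial {u : Fin k → ℕ // Function.Injective u} K),
      (∀ σ : Equiv.Perm ℕ, {x : ℕ | σ x ≠ x}.Finite →
        ∀ f ∈ I, MvPolynomial.rename (permTuple (k := k) σ) f ∈ I) ∧
      ¬ ∃ B : Finset (MvPolynomial {u : Fin k → ℕ // Function.Injective u} K),
          ↑B ⊆ (I : Set (MvPolynomial {u : Fin k → ℕ // Function.Injective u} K)) ∧
          I = Ideal.span {p : MvPolynomial {u : Fin k → ℕ // Function.Injective u} K |
            ∃ σ : Equiv.Perm ℕ, {x : ℕ | σ x ≠ x}.Finite ∧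
              ∃ b ∈ B, p = MvPolynomial.rename (permTuple (k := k) σ) b} := by
  classical
  open MvPolynomial Stmt18Aux in
  -- the set of cycle monomials
  refine ⟨Ideal.span ((fun m => monomial m (1 : K)) ''
      {m : V k →₀ ℕ | ∃ n, 1 ≤ n ∧ Cyc hk n m}), ?_, ?_⟩
  · -- invariance
    intro σ _ f hf
    have hmap : Ideal.map (MvPolynomial.rename (permTuple (k := k) σ)).toRingHom
        (Ideal.span ((fun m => monomial m (1 : K)) ''
          {m : V k →₀ ℕ | ∃ n, 1 ≤ n ∧ Cyc hk n m})) ≤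
        Ideal.span ((fun m => monomial m (1 : K)) ''
          {m : V k →₀ ℕ | ∃ n, 1 ≤ n ∧ Cyc hk n m}) := by
      rw [Ideal.map_span]
      apply Ideal.span_le.mpr
      rintro p ⟨q, ⟨m, ⟨n, hn, hcyc⟩, rfl⟩, rfl⟩
      apply Ideal.subset_span
      exact ⟨Finsupp.mapDomain (permTuple σ) m, ⟨n, hn, cyc_mapDomain hk σ hcyc⟩,
        (rename_monomial _ _ _).symm⟩
    exact hmap (Ideal.mem_map_of_mem _ hf)
  · -- no finite generation
    rintro ⟨B, hB, hspan⟩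
    set D : ℕ := B.sup MvPolynomial.totalDegree with hD
    obtain ⟨m, hm⟩ := cyc_exists (k := k) hk (n := D + 2) (by omega)
    have hmI : monomial m (1 : K) ∈ Ideal.span ((fun m => monomial m (1 : K)) ''
        {m : V k →₀ ℕ | ∃ n, 1 ≤ n ∧ Cyc hk n m}) :=
      Ideal.subset_span ⟨m, ⟨D + 2, by omega, hm⟩, rfl⟩
    -- the span of the σ-translates of B lies in the ideal of short cycle monomials
    have hsub : Ideal.span {p : MvPolynomial (V k) K |
        ∃ σ : Equiv.Perm ℕ, {x : ℕ | σ x ≠ x}.Finite ∧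
          ∃ b ∈ B, p = MvPolynomial.rename (permTuple (k := k) σ) b} ≤
        Ideal.span ((fun m => monomial m (1 : K)) ''
          {m : V k →₀ ℕ | ∃ n, 1 ≤ n ∧ n ≤ D ∧ Cyc hk n m}) := by
      apply Ideal.span_le.mpr
      rintro p ⟨σ, -, b, hbB, rfl⟩
      have hbI : b ∈ Ideal.span ((fun m => monomial m (1 : K)) ''
          {m : V k →₀ ℕ | ∃ n, 1 ≤ n ∧ Cyc hk n m}) := hB hbB
      rw [mem_ideal_span_monomial_image] at hbI
      rw [SetLike.mem_coe, mem_ideal_span_monomial_image]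
      intro xi hxi
      rw [support_rename_of_injective (permTuple_injective σ)] at hxi
      obtain ⟨m'', hm'', rfl⟩ := Finset.mem_image.mp hxi
      obtain ⟨m', ⟨n', hn', hcyc'⟩, hle⟩ := hbI m'' hm''
      refine ⟨Finsupp.mapDomain (permTuple σ) m', ⟨n', hn', ?_, cyc_mapDomain hk σ hcyc'⟩, ?_⟩
      · -- n' ≤ D
        have h1 : (m'.sum fun _ e => e) = n' := deg_eq hk hcyc'
        have h2 : (m''.sum fun _ e => e) ≤ b.totalDegree := le_totalDegree hm''
        have h3 : b.totalDegree ≤ D := Finset.le_sup hbB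
        have h4 := deg_mono hle
        have h5 : n' ≤ b.totalDegree := by rw [← h1]; exact h4.trans h2
        omega
      · obtain ⟨d, rfl⟩ := exists_add_of_le hle
        rw [Finsupp.mapDomain_add]
        exact le_self_add
    have hmem : monomial m (1 : K) ∈ Ideal.span ((fun m => monomial m (1 : K)) ''
        {m : V k →₀ ℕ | ∃ n, 1 ≤ n ∧ n ≤ D ∧ Cyc hk n m}) := by
      apply hsub
      rw [← hspan]
      exact hmI
    rw [mem_ideal_span_monomial_image] at hmem
    have hsupp : m ∈ (monomial m (1 : K)).support := by
      rw [support_monomial, if_neg one_ne_zero]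
      exact Finset.mem_singleton_self m
    obtain ⟨m', ⟨n', hn'1, hn'D, hcyc'⟩, hle⟩ := hmem m hsupp
    have := cyc_rigid hk hn'1 hm hcyc' hle
    omega
end

section
/- Let K be a field, k ≥ 1, f ∈ K[y_1,…,y_k], and for n ≥ k let R_n = K[{x_u}_{u ∈ ⟨n⟩^k}] and let Q_n be the kernel of the K-algebra homomorphism φ_n: R_n → K[t_1,…,t_n] sending x_{(u_1,…,u_k)} to f(t_{u_1},…,t_{u_k}). Then the chain (Q_n)_{n≥k} stabilizes modulo the symmetric group if and only if there exist integers M and N such that for all n > N the ideal Q_n has a generating set consisting of polynomials each of variable size at most M. Moreover, in this case stabilization occurs with bound max(N, kM): L_m(Q_n) = Q_m for all m ≥ n > max(N, kM). -/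
/-- `⟨n⟩^k`: the ordered `k`-element subsets of `{1,…,n}`, i.e. injective `k`-tuples. -/
abbrev Inds (k n : ℕ) := {u : Fin k → Fin n // Function.Injective u}

/-- The kernel `Q_n` of the `K`-algebra homomorphism
`φ_n : R_n = K[{x_u}_{u ∈ ⟨n⟩^k}] → K[t_1,…,t_n]`, `x_{(u_1,…,u_k)} ↦
f(t_{u_1},…,t_{u_k})`. -/
noncomputable def Qker {K : Type*} [Field K] {k : ℕ} (f : MvPolynomial (Fin k) K)
    (n : ℕ) : Ideal (MvPolynomial (Inds k n) K) :=
  RingHom.ker ((MvPolynomial.aeval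
    (fun u : Inds k n => MvPolynomial.rename u.1 f) :
      MvPolynomial (Inds k n) K →ₐ[K] MvPolynomial (Fin n) K) :
        MvPolynomial (Inds k n) K →+* MvPolynomial (Fin n) K)

/-- The inclusion `⟨n⟩^k → ⟨m⟩^k` for `n ≤ m`. -/
def indsIncl {k n m : ℕ} (h : n ≤ m) : Inds k n → Inds k m :=
  fun u => ⟨Fin.castLE h ∘ u.1, (Fin.castLE_injective h).comp u.2⟩

/-- The action of `σ ∈ 𝔖_m` on `⟨m⟩^k`. -/
def permInds {k m : ℕ} (σ : Equiv.Perm (Fin m)) : Inds k m → Inds k m :=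
  fun u => ⟨⇑σ ∘ u.1, σ.injective.comp u.2⟩

/-- The `m`-symmetrization `L_m(B)` of `B ⊆ R_n = K[{x_u}_{u ∈ ⟨n⟩^k}]`, `n ≤ m`: the
ideal of `R_m` generated by `{σg : σ ∈ 𝔖_m, g ∈ B}`. -/
noncomputable def LsymInds {K : Type*} [CommRing K] {k n m : ℕ} (h : n ≤ m)
    (B : Set (MvPolynomial (Inds k n) K)) : Ideal (MvPolynomial (Inds k m) K) :=
  Ideal.span {p : MvPolynomial (Inds k m) K | ∃ σ : Equiv.Perm (Fin m), ∃ g ∈ B,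
    p = MvPolynomial.rename (permInds σ) (MvPolynomial.rename (indsIncl h) g)}

open MvPolynomial

/-- General injective map on index tuples. -/
def indsMap {k n m : ℕ} (ρ : Fin n → Fin m) (hρ : Function.Injective ρ) :
    Inds k n → Inds k m := fun u => ⟨ρ ∘ u.1, hρ.comp u.2⟩

lemma indsMap_injective {k n m : ℕ} (ρ : Fin n → Fin m) (hρ : Function.Injective ρ) :
    Function.Injective (indsMap (k := k) ρ hρ) := by
  intro u v huv
  apply Subtype.ext
  have := congrArg Subtype.val huv
  funext i
  exact hρ (congrFun this i)

lemma aeval_rename_indsMap {K : Type*} [Field K] {k n m : ℕ}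
    (f : MvPolynomial (Fin k) K) (ρ : Fin n → Fin m) (hρ : Function.Injective ρ)
    (p : MvPolynomial (Inds k n) K) :
    aeval (fun u : Inds k m => rename u.1 f) (rename (indsMap ρ hρ) p) =
      rename ρ (aeval (fun u : Inds k n => rename u.1 f) p) := by
  rw [← AlgHom.comp_apply, ← AlgHom.comp_apply]
  congr 1
  apply algHom_ext
  intro u
  simp [indsMap, rename_rename]

lemma rename_indsMap_mem_Qker_iff {K : Type*} [Field K] {k n m : ℕ}
    (f : MvPolynomial (Fin k) K) (ρ : Fin n → Fin m) (hρ : Function.Injective ρ)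
    (p : MvPolynomial (Inds k n) K) :
    rename (indsMap ρ hρ) p ∈ Qker f m ↔ p ∈ Qker f n := by
  have h1 : rename (indsMap ρ hρ) p ∈ Qker f m ↔
      aeval (fun u : Inds k m => rename u.1 f) (rename (indsMap ρ hρ) p) = 0 :=
    Iff.rfl
  have h2 : p ∈ Qker f n ↔
      aeval (fun u : Inds k n => rename u.1 f) p = 0 := Iff.rfl
  rw [h1, h2, aeval_rename_indsMap]
  constructor
  · intro hz
    apply rename_injective ρ hρ
    simpa using hz
  · intro hz
    rw [hz, map_zero]

lemma exists_rename_of_vars {K : Type*} [Field K] {σ τ : Type*} {φ : σ → τ}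
    (hφ : Function.Injective φ) (p : MvPolynomial τ K)
    (hp : ∀ v ∈ p.vars, v ∈ Set.range φ) : ∃ q, rename φ q = p := by
  have hmem : p ∈ supported K (Set.range φ) := mem_supported.2 (fun v hv => by
    simp only [Finset.mem_coe] at hv; exact hp v hv)
  rw [supported_eq_range_rename, AlgHom.mem_range] at hmem
  obtain ⟨q, hq⟩ := hmem
  refine ⟨rename (Equiv.ofInjective φ hφ).symm q, ?_⟩
  rw [rename_rename]
  have hcomp : φ ∘ ⇑(Equiv.ofInjective φ hφ).symm = (Subtype.val : Set.range φ → τ) := by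
    funext x
    exact Equiv.apply_ofInjective_symm hφ x
  rw [hcomp, hq]

lemma LsymInds_le_Qker {K : Type*} [Field K] {k : ℕ} (f : MvPolynomial (Fin k) K)
    {n m : ℕ} (h : n ≤ m) :
    LsymInds h ((Qker f n : Ideal (MvPolynomial (Inds k n) K)) :
      Set (MvPolynomial (Inds k n) K)) ≤ Qker f m := by
  rw [LsymInds, Ideal.span_le]
  rintro p ⟨σ, g, hg, rfl⟩
  rw [rename_rename]
  have hco : (permInds (k := k) σ) ∘ indsIncl h =
      indsMap (⇑σ ∘ Fin.castLE h) (σ.injective.comp (Fin.castLE_injective h)) := rfl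
  rw [hco]
  exact SetLike.mem_coe.2 ((rename_indsMap_mem_Qker_iff f _ _ g).2 hg)

lemma part2 {K : Type*} [Field K] {k : ℕ} (f : MvPolynomial (Fin k) K)
    (M N : ℕ)
    (hyp : ∀ n : ℕ, N < n →
      ∃ S : Set (MvPolynomial (Inds k n) K), Ideal.span S = Qker f n ∧
        ∀ g ∈ S, (MvPolynomial.vars g).card ≤ M)
    (n m : ℕ) (h : n ≤ m) (hn : max N (k * M) < n) :
    LsymInds h ((Qker f n : Ideal (MvPolynomial (Inds k n) K)) :
      Set (MvPolynomial (Inds k n) K)) = Qker f m := by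
  apply le_antisymm (LsymInds_le_Qker f h)
  have hm : N < m := lt_of_lt_of_le (lt_of_le_of_lt (le_max_left _ _) hn) h
  obtain ⟨S, hSspan, hSvars⟩ := hyp m hm
  rw [← hSspan, Ideal.span_le]
  intro g hgS
  have hgQ : g ∈ Qker f m := hSspan ▸ Ideal.subset_span hgS
  classical
  -- the set of indices used by g
  set s : Finset (Fin m) := (vars g).biUnion (fun u => Finset.image u.1 Finset.univ)
    with hs
  have hscard : s.card ≤ k * M := by
    calc s.card ≤ ∑ u ∈ vars g, (Finset.image u.1 Finset.univ).card :=
          Finset.card_biUnion_le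
      _ ≤ ∑ _u ∈ vars g, k := by
          apply Finset.sum_le_sum
          intro u _
          calc (Finset.image u.1 Finset.univ).card ≤ Finset.univ.card :=
                Finset.card_image_le
            _ = k := by simp
      _ = (vars g).card * k := by rw [Finset.sum_const, smul_eq_mul]
      _ ≤ M * k := Nat.mul_le_mul_right k (hSvars g hgS)
      _ = k * M := Nat.mul_comm _ _
  have hsn : s.card ≤ n :=
    le_of_lt (lt_of_le_of_lt hscard (lt_of_le_of_lt (le_max_right N _) hn))
  -- choose a target set t inside the image of castLE
  have himg : (Finset.image (Fin.castLE h) Finset.univ).card = n := by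
    rw [Finset.card_image_of_injective _ (Fin.castLE_injective h),
      Finset.card_univ, Fintype.card_fin]
  obtain ⟨t, hts, htcard⟩ :=
    Finset.exists_subset_card_eq (le_trans hsn (le_of_eq himg.symm))
  -- a permutation sending s into t
  have e : {x : Fin m // x ∈ s} ≃ {x : Fin m // x ∈ t} := by
    apply Fintype.equivOfCardEq
    rw [Fintype.card_coe, Fintype.card_coe, htcard]
  set σ : Equiv.Perm (Fin m) := e.extendSubtype with hσdef
  have hσmem : ∀ x ∈ s, ∃ y : Fin n, Fin.castLE h y = σ x := by
    intro x hx
    have h1 : σ x ∈ t := e.extendSubtype_mem x hx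
    have h2 : σ x ∈ Finset.image (Fin.castLE h) Finset.univ := hts h1
    obtain ⟨y, _, hy⟩ := Finset.mem_image.1 h2
    exact ⟨y, hy⟩
  -- g renamed by σ has all variables in the range of indsIncl
  have hvars : ∀ v ∈ (rename (indsMap ⇑σ σ.injective) g).vars,
      v ∈ Set.range (indsMap (Fin.castLE h) (Fin.castLE_injective h)) := by
    intro v hv
    have hv' := vars_rename (indsMap ⇑σ σ.injective) g hv
    obtain ⟨u, hu, rfl⟩ := Finset.mem_image.1 hv'
    -- each index of u lies in s
    have hui : ∀ i : Fin k, ∃ y : Fin n, Fin.castLE h y = σ (u.1 i) := by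
      intro i
      apply hσmem
      rw [hs]
      exact Finset.mem_biUnion.2 ⟨u, hu, Finset.mem_image.2 ⟨i, Finset.mem_univ i, rfl⟩⟩
    choose w hw using hui
    have hwinj : Function.Injective w := by
      intro i j hij
      apply u.2
      apply σ.injective
      rw [← hw i, ← hw j, hij]
    refine ⟨⟨w, hwinj⟩, ?_⟩
    apply Subtype.ext
    funext i
    exact hw i
  obtain ⟨g₀, hg₀⟩ := exists_rename_of_vars (K := K)
    (indsMap_injective (Fin.castLE h) (Fin.castLE_injective h))
    (rename (indsMap ⇑σ σ.injective) g) hvars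
  have hg₀Q : g₀ ∈ Qker f n := by
    rw [← rename_indsMap_mem_Qker_iff f (Fin.castLE h) (Fin.castLE_injective h), hg₀]
    exact (rename_indsMap_mem_Qker_iff f ⇑σ σ.injective g).2 hgQ
  -- g is obtained from g₀ by σ⁻¹
  rw [LsymInds]
  apply Ideal.subset_span
  refine ⟨σ⁻¹, g₀, SetLike.mem_coe.2 hg₀Q, ?_⟩
  have hIncl : (indsIncl h : Inds k n → Inds k m) =
      indsMap (Fin.castLE h) (Fin.castLE_injective h) := rfl
  have hPerm : ∀ τ : Equiv.Perm (Fin m), (permInds (k := k) τ) = indsMap ⇑τ τ.injective :=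
    fun _ => rfl
  rw [hIncl, hg₀, hPerm, rename_rename]
  have hco : indsMap (⇑σ⁻¹) σ⁻¹.injective ∘ indsMap ⇑σ σ.injective =
      id (α := Inds k m) := by
    funext u
    apply Subtype.ext
    funext i
    exact σ.symm_apply_apply (u.1 i)
  rw [hco, rename_id, AlgHom.id_apply]

/-- For a field `K`, `k ≥ 1` and `f ∈ K[y_1,…,y_k]`, the chain
`(Q_n)` of kernels induced by `f` stabilizes modulo the symmetric group (there is `N`
with `L_m(Q_n) = Q_m` for all `m ≥ n > N`) if and only if there are `M, N` such that
for all `n > N` the ideal `Q_n` has a generating set of polynomials of variable size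
(number of distinct indeterminates occurring) at most `M`.  Moreover, in this case
stabilization occurs with bound `max(N, kM)`: `L_m(Q_n) = Q_m` for all
`m ≥ n > max(N, kM)`. -/
theorem stmt19 {K : Type*} [Field K] (k : ℕ) (hk : 1 ≤ k)
    (f : MvPolynomial (Fin k) K) :
    ((∃ N : ℕ, ∀ (n m : ℕ) (h : n ≤ m), N < n →
        LsymInds h ((Qker f n : Ideal (MvPolynomial (Inds k n) K)) :
          Set (MvPolynomial (Inds k n) K)) = Qker f m) ↔
      (∃ M N : ℕ, ∀ n : ℕ, N < n →
        ∃ S : Set (MvPolynomial (Inds k n) K), Ideal.span S = Qker f n ∧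
          ∀ g ∈ S, (MvPolynomial.vars g).card ≤ M)) ∧
    (∀ M N : ℕ,
      (∀ n : ℕ, N < n →
        ∃ S : Set (MvPolynomial (Inds k n) K), Ideal.span S = Qker f n ∧
          ∀ g ∈ S, (MvPolynomial.vars g).card ≤ M) →
      ∀ (n m : ℕ) (h : n ≤ m), max N (k * M) < n →
        LsymInds h ((Qker f n : Ideal (MvPolynomial (Inds k n) K)) :
          Set (MvPolynomial (Inds k n) K)) = Qker f m) := by
  classical
  refine ⟨⟨?_, ?_⟩, fun M N hyp => part2 f M N hyp⟩
  · rintro ⟨N, hN⟩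
    haveI : Fintype (Inds k (N + 1)) := Fintype.ofFinite _
    refine ⟨Fintype.card (Inds k (N + 1)), N, fun n hn => ?_⟩
    have h' : N + 1 ≤ n := hn
    refine ⟨{p : MvPolynomial (Inds k n) K | ∃ σ : Equiv.Perm (Fin n),
      ∃ g ∈ ((Qker f (N + 1) : Ideal (MvPolynomial (Inds k (N + 1)) K)) :
        Set (MvPolynomial (Inds k (N + 1)) K)),
      p = rename (permInds σ) (rename (indsIncl h') g)}, ?_, ?_⟩
    · exact hN (N + 1) n h' (Nat.lt_succ_self N)
    · rintro g ⟨σ, g₀, _, rfl⟩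
      calc (vars (rename (permInds σ) (rename (indsIncl h') g₀))).card
          ≤ (Finset.image (permInds σ) (vars (rename (indsIncl h') g₀))).card :=
            Finset.card_le_card (vars_rename _ _)
        _ ≤ (vars (rename (indsIncl h') g₀)).card := Finset.card_image_le
        _ ≤ (Finset.image (indsIncl h') (vars g₀)).card :=
            Finset.card_le_card (vars_rename _ _)
        _ ≤ (vars g₀).card := Finset.card_image_le
        _ ≤ Fintype.card (Inds k (N + 1)) := by
            rw [← Finset.card_univ]; exact Finset.card_le_univ _
  · rintro ⟨M, N, hyp⟩
    exact ⟨max N (k * M), part2 f M N hyp⟩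
end
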